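/- Let p be an odd prime, F ∈ ℤ_p[t] monic, and A ∈ M_n(ℤ_p) with cyclic reduction Ā ∈ M_n(𝔽_p). Suppose B̃ ∈ M_n(𝔽_p) satisfies F̄(B̃) = Ā and F̄'(B̃) ∈ GL_n(𝔽_p). Then there exists B ∈ M_n(ℤ_p) reducing to B̃ mod p with F(B) = A. -/

import Mathlib

open Polynomial

lemma aux_aeval_mem_span_pow {K A : Type*} [Field K] [Ring A] [Algebra K A]
    (x : A) (hint : IsIntegral K x) {n : ℕ} (hd : (minpoly K x).natDegree ≤ n) (g : K[X]) :
    aeval x g ∈ Submodule.span K (Set.range fun i : Fin n => x ^ (i : ℕ)) := by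
  have hm : (minpoly K x).Monic := minpoly.monic hint
  have h1 : aeval x g = aeval x (g %ₘ minpoly K x) := by
    conv_lhs => rw [← modByMonic_add_div g (minpoly K x)]
    simp [minpoly.aeval]
  rw [h1]
  rcases eq_or_ne (g %ₘ minpoly K x) 0 with h0 | h0
  · rw [h0]; simp
  · have hdeg : (g %ₘ minpoly K x).natDegree < n := by
      have h2 := degree_modByMonic_lt g hm
      have h3 : (g %ₘ minpoly K x).natDegree < (minpoly K x).natDegree :=
        natDegree_lt_natDegree h0 h2
      omega
    rw [aeval_eq_sum_range' hdeg]
    apply Submodule.sum_smul_mem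
    intro i hi
    exact Submodule.subset_span ⟨⟨i, Finset.mem_range.mp hi⟩, rfl⟩


lemma aux_adicComplete {p : ℕ} [Fact p.Prime] (R : Type*) [CommRing R] [Algebra ℤ_[p] R]
    {ι : Type*} [Fintype ι] (b : Module.Basis ι ℤ_[p] R) :
    IsAdicComplete (Ideal.span {(p : R)}) R := by
  have hpR : ∀ k : ℕ, ((p : R)) ^ k = algebraMap ℤ_[p] R ((p : ℤ_[p]) ^ k) := by
    intro k; rw [map_pow, map_natCast]
  have key : ∀ (k : ℕ) (x : R),
      x ∈ (Ideal.span {(p : R)}) ^ k ↔ ∀ i, (p : ℤ_[p]) ^ k ∣ b.repr x i := by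
    intro k x
    rw [Ideal.span_singleton_pow, Ideal.mem_span_singleton]
    constructor
    · rintro ⟨y, rfl⟩ i
      rw [hpR, ← Algebra.smul_def, map_smul]
      exact ⟨b.repr y i, rfl⟩
    · intro h
      choose c hc using h
      refine ⟨∑ i, c i • b i, ?_⟩
      calc x = ∑ i, b.repr x i • b i := (b.sum_repr x).symm
        _ = ∑ i, ((p : ℤ_[p]) ^ k * c i) • b i := by
              refine Finset.sum_congr rfl fun i _ => ?_; rw [← hc]
        _ = (p : ℤ_[p]) ^ k • ∑ i, c i • b i := by
              rw [Finset.smul_sum]; exact Finset.sum_congr rfl fun i _ => (mul_smul _ _ _)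
        _ = (p : R) ^ k * ∑ i, c i • b i := by rw [hpR, ← Algebra.smul_def]
  have keysub : ∀ (k : ℕ),
      (Ideal.span {(p : R)} ^ k • ⊤ : Submodule R R) = (Ideal.span {(p : R)}) ^ k := by
    intro k; rw [← Ideal.one_eq_top, smul_eq_mul, mul_one]
  have keyz : ∀ (k : ℕ) (c : ℤ_[p]),
      c ∈ (IsLocalRing.maximalIdeal ℤ_[p] ^ k • ⊤ : Submodule ℤ_[p] ℤ_[p]) ↔
        (p : ℤ_[p]) ^ k ∣ c := by
    intro k c
    rw [← Ideal.one_eq_top, smul_eq_mul, mul_one, PadicInt.maximalIdeal_eq_span_p,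
      Ideal.span_singleton_pow, Ideal.mem_span_singleton]
  have hzero : ∀ c : ℤ_[p], (∀ k : ℕ, (p : ℤ_[p]) ^ k ∣ c) → c = 0 := by
    intro c hc
    by_contra h0
    obtain ⟨k, hk⟩ := PadicInt.exists_pow_neg_lt p (norm_pos_iff.mpr h0)
    have : ‖c‖ ≤ (p : ℝ) ^ (-(k : ℤ)) :=
      (PadicInt.norm_le_pow_iff_mem_span_pow c k).mpr
        (Ideal.mem_span_singleton.mpr (hc k))
    linarith
  refine { toIsHausdorff := ⟨?_⟩, toIsPrecomplete := ⟨?_⟩ }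
  · intro x hx
    refine b.ext_elem fun i => ?_
    rw [map_zero, Finsupp.coe_zero, Pi.zero_apply]
    refine hzero _ fun k => ?_
    have := hx k
    rw [SModEq.sub_mem, sub_zero, keysub k] at this
    exact (key k x).mp this i
  · intro f hf
    have hcau : ∀ i, ∀ {m k : ℕ}, m ≤ k →
        b.repr (f m) i ≡ b.repr (f k) i
          [SMOD (IsLocalRing.maximalIdeal ℤ_[p] ^ m • ⊤ : Submodule ℤ_[p] ℤ_[p])] := by
      intro i m k hmk
      rw [SModEq.sub_mem, keyz]
      have := hf hmk
      rw [SModEq.sub_mem, keysub] at this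
      have h2 := (key m _).mp this i
      rwa [map_sub, Finsupp.coe_sub, Pi.sub_apply] at h2
    have hZ : IsPrecomplete (IsLocalRing.maximalIdeal ℤ_[p]) ℤ_[p] := inferInstance
    choose L hL using fun i => hZ.prec (f := fun k => b.repr (f k) i) (hcau i)
    refine ⟨∑ i, L i • b i, fun k => ?_⟩
    rw [SModEq.sub_mem, keysub]
    rw [key]
    intro i
    have h3 := hL i k
    rw [SModEq.sub_mem, keyz] at h3
    have hrepr : b.repr (∑ j, L j • b j) i = L i := by
      rw [map_sum]
      simp only [map_smul, Finsupp.coe_finset_sum, Finsupp.coe_smul, Finset.sum_apply,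
        Pi.smul_apply, Module.Basis.repr_self, smul_eq_mul]
      rw [Finset.sum_eq_single i]
      · simp
      · intro j _ hj; simp [Finsupp.single_apply, hj]
      · intro h; exact absurd (Finset.mem_univ i) h
    rw [map_sub, Finsupp.coe_sub, Pi.sub_apply, hrepr]
    exact h3
lemma stmt15_part1 (p : ℕ) [Fact p.Prime]
    (n : ℕ) (hn : 0 < n) (A : Matrix (Fin n) (Fin n) ℤ_[p])
    (hcyc : minpoly (ZMod p) (A.map PadicInt.toZMod) =
      (A.map PadicInt.toZMod).charpoly)
    (F : Polynomial ℤ_[p])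
    (Btil : Matrix (Fin n) (Fin n) (ZMod p))
    (hB1 : aeval Btil (F.map PadicInt.toZMod) = A.map PadicInt.toZMod) :
    ∃ gbar : (ZMod p)[X], aeval (A.map PadicInt.toZMod) gbar = Btil := by
  classical
  haveI : NeZero n := ⟨hn.ne'⟩
  set Abar := A.map (PadicInt.toZMod) with hAbar
  have hB_int : IsIntegral (ZMod p) Btil := IsIntegral.of_finite (ZMod p) Btil
  have hcard : (Matrix.charpoly Btil).natDegree = n := by
    rw [Matrix.charpoly_natDegree_eq_dim, Fintype.card_fin]
  have hminA : (minpoly (ZMod p) Abar).natDegree = n := by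
    rw [hcyc, Matrix.charpoly_natDegree_eq_dim, Fintype.card_fin]
  have hdB : (minpoly (ZMod p) Btil).natDegree ≤ n :=
    le_trans (natDegree_le_of_dvd (Matrix.minpoly_dvd_charpoly Btil)
      (Matrix.charpoly_monic _).ne_zero) (le_of_eq hcard)
  set S := Submodule.span (ZMod p) (Set.range fun i : Fin n => Btil ^ (i : ℕ)) with hSdef
  set T := Submodule.span (ZMod p) (Set.range fun i : Fin n => Abar ^ (i : ℕ)) with hTdef
  have hTS : T ≤ S := by
    rw [hTdef, Submodule.span_le]
    rintro _ ⟨i, rfl⟩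
    show Abar ^ (i : ℕ) ∈ S
    have h4 : Abar ^ (i : ℕ) = aeval Btil ((F.map PadicInt.toZMod) ^ (i : ℕ)) := by
      rw [map_pow, hB1]
    rw [h4]
    exact aux_aeval_mem_span_pow Btil hB_int hdB _
  have hli : LinearIndependent (ZMod p) fun i : Fin n => Abar ^ (i : ℕ) := by
    have h7 := linearIndependent_pow (K := ZMod p) Abar
    rwa [hminA] at h7
  have hT : Module.finrank (ZMod p) T = n := by
    rw [hTdef, finrank_span_eq_card hli, Fintype.card_fin]
  have hS : Module.finrank (ZMod p) S ≤ n := by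
    have h5 := finrank_span_le_card (R := ZMod p)
      (Set.range fun i : Fin n => Btil ^ (i : ℕ))
    refine le_trans h5 ?_
    rw [Set.toFinset_card]
    exact le_trans (Fintype.card_range_le _) (by simp)
  have hST : T = S := by
    apply Submodule.eq_of_le_of_finrank_eq hTS
    have h6 : Module.finrank (ZMod p) T ≤ Module.finrank (ZMod p) S :=
      Submodule.finrank_mono hTS
    exact le_antisymm h6 (by rw [hT]; exact hS)
  have hBmem : Btil ∈ T := by
    rw [hST]
    simpa using aux_aeval_mem_span_pow Btil hB_int hdB X
  obtain ⟨c, hc⟩ := (Submodule.mem_span_range_iff_exists_fun (ZMod p)).mp hBmem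
  refine ⟨∑ i : Fin n, C (c i) * X ^ (i : ℕ), ?_⟩
  rw [map_sum, ← hc]
  refine Finset.sum_congr rfl fun i _ => ?_
  rw [map_mul, aeval_C, aeval_X_pow, Algebra.smul_def]

lemma aux_toZMod_surj {p : ℕ} [Fact p.Prime] :
    Function.Surjective (PadicInt.toZMod (p := p)) := by
  intro c
  refine ⟨((c.val : ℕ) : ℤ_[p]), ?_⟩
  rw [map_natCast]
  simp [ZMod.natCast_val, ZMod.cast_id]

set_option maxHeartbeats 1000000 in
lemma stmt15_part2 (p : ℕ) [Fact p.Prime]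
    (F : Polynomial ℤ_[p]) (hF : F.Monic)
    (n : ℕ) (hn : 0 < n) (A : Matrix (Fin n) (Fin n) ℤ_[p])
    (hcyc : minpoly (ZMod p) (A.map PadicInt.toZMod) =
      (A.map PadicInt.toZMod).charpoly)
    (Btil : Matrix (Fin n) (Fin n) (ZMod p))
    (hB1 : aeval Btil (F.map PadicInt.toZMod) = A.map PadicInt.toZMod)
    (hB2 : IsUnit (aeval Btil (derivative (F.map PadicInt.toZMod))))
    (gbar : (ZMod p)[X]) (hgbar : aeval (A.map PadicInt.toZMod) gbar = Btil) :
    ∃ B : Matrix (Fin n) (Fin n) ℤ_[p],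
      B.map PadicInt.toZMod = Btil ∧ aeval B F = A := by
  classical
  haveI : NeZero n := ⟨hn.ne'⟩
  set Abar := A.map (PadicInt.toZMod) with hAbar
  set χ : Polynomial ℤ_[p] := Matrix.charpoly A with hχdef
  have hχ : χ.Monic := A.charpoly_monic
  have pb : PowerBasis ℤ_[p] (AdjoinRoot χ) := AdjoinRoot.powerBasis' hχ
  haveI : IsAdicComplete (Ideal.span {(p : AdjoinRoot χ)}) (AdjoinRoot χ) :=
    aux_adicComplete _ pb.basis
  set I : Ideal (AdjoinRoot χ) := Ideal.span {(p : AdjoinRoot χ)} with hIdef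
  haveI : HenselianRing (AdjoinRoot χ) I := inferInstance
  -- reduction of χ is the minimal polynomial of Abar
  have hχmin : χ.map PadicInt.toZMod = minpoly (ZMod p) Abar := by
    rw [hcyc, hAbar, ← Matrix.charpoly_map]
  have hdvd_span : ∀ w : (ZMod p)[X], aeval Abar w = 0 →
      w ∈ Ideal.span {χ.map PadicInt.toZMod} := fun w hw =>
    Ideal.mem_span_singleton.mpr (hχmin ▸ minpoly.dvd (ZMod p) Abar hw)
  -- lifting lemma
  have L1 : ∀ y : Polynomial ℤ_[p], (y.map PadicInt.toZMod) ∈ Ideal.span {χ.map PadicInt.toZMod} →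
      AdjoinRoot.mk χ y ∈ I := by
    intro y hy
    obtain ⟨qbar, hq⟩ := Ideal.mem_span_singleton.mp hy
    obtain ⟨q, rfl⟩ := Polynomial.map_surjective _ aux_toZMod_surj qbar
    have hz : (y - χ * q).map PadicInt.toZMod = 0 := by
      rw [Polynomial.map_sub, Polynomial.map_mul, hq, sub_self]
    have hz2 : y - χ * q ∈ Ideal.map (C : ℤ_[p] →+* Polynomial ℤ_[p])
        (Ideal.span {(p : ℤ_[p])}) := by
      rw [Ideal.mem_map_C_iff]
      intro k
      rw [← PadicInt.maximalIdeal_eq_span_p, ← PadicInt.ker_toZMod, RingHom.mem_ker]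
      have h8 : ((y - χ * q).map PadicInt.toZMod).coeff k = 0 := by rw [hz]; simp
      rwa [Polynomial.coeff_map] at h8
    rw [Ideal.map_span, Set.image_singleton] at hz2
    obtain ⟨w, hw⟩ := Ideal.mem_span_singleton.mp hz2
    have h9 : AdjoinRoot.mk χ y = (p : AdjoinRoot χ) * AdjoinRoot.mk χ w := by
      have h10 : y = χ * q + C (p : ℤ_[p]) * w := by
        rw [← hw]; ring
      rw [h10, map_add, map_mul, map_mul, AdjoinRoot.mk_self, zero_mul, zero_add,
        Polynomial.C_eq_natCast, map_natCast]
    rw [h9, hIdef]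
    exact Ideal.mem_span_singleton.mpr (Dvd.intro _ rfl)
  -- lift gbar
  obtain ⟨g, hg⟩ := Polynomial.map_surjective _ aux_toZMod_surj gbar
  -- the inverse of the derivative mod χbar
  haveI : Module.Finite (ZMod p) (AdjoinRoot (χ.map PadicInt.toZMod)) :=
    Module.Finite.of_basis (AdjoinRoot.powerBasis' (hχ.map _)).basis
  have hroot0 : aeval Abar (χ.map PadicInt.toZMod) = 0 := by
    rw [hχmin]; exact minpoly.aeval _ _
  set dbar : (ZMod p)[X] := (derivative (F.map PadicInt.toZMod)).comp gbar with hdbardef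
  have hdbar : aeval Abar dbar = aeval Btil (derivative (F.map PadicInt.toZMod)) := by
    rw [hdbardef, aeval_comp, hgbar]
  set t : AdjoinRoot (χ.map PadicInt.toZMod) := AdjoinRoot.mk _ dbar with htdef
  have hker : ∀ v, t * v = 0 → v = 0 := by
    intro v hv
    obtain ⟨q, rfl⟩ := AdjoinRoot.mk_surjective v
    rw [htdef, ← map_mul, AdjoinRoot.mk_eq_zero] at hv
    obtain ⟨e, he⟩ := hv
    have h11 : aeval Abar (dbar * q) = 0 := by
      rw [he, map_mul, hroot0, zero_mul]
    rw [map_mul, hdbar] at h11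
    have h12 : aeval Abar q = 0 := by
      rcases hB2 with ⟨u, hu⟩
      calc aeval Abar q = (↑u⁻¹ * ↑u) * aeval Abar q := by rw [Units.inv_mul, one_mul]
        _ = ↑u⁻¹ * (↑u * aeval Abar q) := by rw [mul_assoc]
        _ = 0 := by rw [hu, h11, mul_zero]
    rw [AdjoinRoot.mk_eq_zero]
    exact hχmin ▸ minpoly.dvd (ZMod p) Abar h12
  have hinj : Function.Injective (LinearMap.mulLeft (ZMod p) t) :=
    LinearMap.ker_eq_bot.mp (LinearMap.ker_eq_bot'.mpr (by
      intro m hm; exact hker m (by simpa using hm)))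
  obtain ⟨v, hv⟩ := (LinearMap.injective_iff_surjective.mp hinj) 1
  obtain ⟨ubar, rfl⟩ := AdjoinRoot.mk_surjective v
  have huv : dbar * ubar - 1 ∈ Ideal.span {χ.map PadicInt.toZMod} := by
    rw [Ideal.mem_span_singleton, ← AdjoinRoot.mk_eq_zero]
    rw [map_sub, map_mul, map_one, sub_eq_zero]
    simpa [htdef, LinearMap.mulLeft_apply] using hv
  obtain ⟨u, hu⟩ := Polynomial.map_surjective _ aux_toZMod_surj ubar
  -- set up Hensel
  set a : AdjoinRoot χ := AdjoinRoot.root χ with hadef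
  set fpol : Polynomial (AdjoinRoot χ) := F.map (algebraMap ℤ_[p] (AdjoinRoot χ)) - C a with hfpoldef
  have hdegF : 0 < F.natDegree := by
    by_contra h
    push_neg at h
    have hF1 : F = 1 := hF.natDegree_eq_zero.mp (Nat.le_zero.mp h)
    rw [hF1] at hB2
    simp only [Polynomial.map_one, derivative_one, map_zero] at hB2
    exact (not_isUnit_zero (M₀ := Matrix (Fin n) (Fin n) (ZMod p))) hB2
  have hχdeg : χ.natDegree = n := by
    rw [hχdef, Matrix.charpoly_natDegree_eq_dim, Fintype.card_fin]
  haveI : Nontrivial (AdjoinRoot χ) := AdjoinRoot.nontrivial χ (by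
    rw [degree_eq_natDegree hχ.ne_zero, hχdeg]
    exact_mod_cast hn.ne')
  have hmonicmap : (F.map (algebraMap ℤ_[p] (AdjoinRoot χ))).Monic := hF.map _
  have hmonic : fpol.Monic := by
    rw [hfpoldef, sub_eq_add_neg]
    refine hmonicmap.add_of_left ?_
    rw [degree_neg]
    refine lt_of_le_of_lt (degree_C_le) ?_
    rw [← natDegree_pos_iff_degree_pos, hF.natDegree_map]
    exact hdegF
  -- Hensel hypothesis 1
  have hevalpoly : ∀ G z : Polynomial ℤ_[p],
      (G.map (algebraMap ℤ_[p] (AdjoinRoot χ))).eval (AdjoinRoot.mk χ z) =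
        AdjoinRoot.mk χ (G.comp z) := by
    intro G z
    rw [eval_map, ← aeval_def, show (AdjoinRoot.mk χ) z = aeval (AdjoinRoot.root χ) z from
      (AdjoinRoot.aeval_eq z).symm, ← aeval_comp, AdjoinRoot.aeval_eq]
  have h1 : fpol.eval (AdjoinRoot.mk χ g) ∈ I := by
    rw [hfpoldef, eval_sub, eval_C, hevalpoly, hadef, ← AdjoinRoot.mk_X (f := χ), ← map_sub]
    apply L1
    apply hdvd_span
    rw [Polynomial.map_sub, Polynomial.map_comp, hg, Polynomial.map_X, map_sub, aeval_comp,
      hgbar, hB1, aeval_X, sub_self]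
  -- Hensel hypothesis 2
  have hderiv : fpol.derivative.eval (AdjoinRoot.mk χ g) =
      AdjoinRoot.mk χ ((derivative F).comp g) := by
    rw [hfpoldef, derivative_sub, derivative_C, sub_zero, derivative_map, hevalpoly]
  have h2mem : (derivative F).comp g * u - 1 ∈ Ideal.comap (Polynomial.mapRingHom (PadicInt.toZMod (p := p))) (Ideal.span {χ.map PadicInt.toZMod}) := by
    rw [Ideal.mem_comap, Polynomial.coe_mapRingHom, Polynomial.map_sub, Polynomial.map_one,
      Polynomial.map_mul, Polynomial.map_comp, hg, hu, ← derivative_map]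
    exact huv
  have h2 : IsUnit (Ideal.Quotient.mk I (fpol.derivative.eval (AdjoinRoot.mk χ g))) := by
    refine IsUnit.of_mul_eq_one (Ideal.Quotient.mk I (AdjoinRoot.mk χ u)) ?_
    rw [hderiv, ← map_mul, ← map_mul, ← map_one (Ideal.Quotient.mk I)]
    refine Ideal.Quotient.eq.mpr ?_
    rw [← map_one (AdjoinRoot.mk χ), ← map_sub]
    apply L1
    rw [Ideal.mem_comap, Polynomial.coe_mapRingHom] at h2mem
    exact h2mem
  -- apply Hensel's lemma
  obtain ⟨bb, hroot, hnear⟩ :=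
    HenselianRing.is_henselian (I := I) fpol hmonic (AdjoinRoot.mk χ g) h1 h2
  obtain ⟨y, rfl⟩ := AdjoinRoot.mk_surjective bb
  -- root property at the polynomial level
  have hχy : χ ∣ F.comp y - X := by
    have h30 : AdjoinRoot.mk χ (F.comp y) = a := by
      have h31 := hroot
      rw [Polynomial.IsRoot.def, hfpoldef, eval_sub, eval_C, hevalpoly, sub_eq_zero] at h31
      exact h31
    rw [← AdjoinRoot.mk_eq_zero, map_sub, h30, hadef, ← AdjoinRoot.mk_X (f := χ), sub_self]
  -- nearness at the polynomial level
  have hnear' : ∃ w e : Polynomial ℤ_[p], y = g + C (p : ℤ_[p]) * w + χ * e := by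
    rw [hIdef, ← map_sub, Ideal.mem_span_singleton] at hnear
    obtain ⟨δ, hδ⟩ := hnear
    obtain ⟨w, rfl⟩ := AdjoinRoot.mk_surjective δ
    have hpc : (p : AdjoinRoot χ) = AdjoinRoot.mk χ (C (p : ℤ_[p])) := by
      rw [Polynomial.C_eq_natCast, map_natCast]
    rw [hpc, ← map_mul, ← sub_eq_zero, ← map_sub, AdjoinRoot.mk_eq_zero] at hδ
    obtain ⟨e, he⟩ := hδ
    refine ⟨w, e, ?_⟩
    have : y - g - C (p : ℤ_[p]) * w = χ * e := he
    linear_combination this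
  obtain ⟨w, e, hye⟩ := hnear'
  -- the final matrix
  refine ⟨aeval A y, ?_, ?_⟩
  · -- reduction
    have hscalar : ∀ c : ℤ_[p],
        (algebraMap ℤ_[p] (Matrix (Fin n) (Fin n) ℤ_[p]) c).map PadicInt.toZMod =
          algebraMap (ZMod p) (Matrix (Fin n) (Fin n) (ZMod p)) (PadicInt.toZMod c) := by
      intro c
      ext i j
      rw [Matrix.map_apply, Matrix.algebraMap_matrix_apply, Matrix.algebraMap_matrix_apply]
      split_ifs <;> simp
    have hcompat : ∀ q : Polynomial ℤ_[p],
        (aeval A q).map PadicInt.toZMod = aeval Abar (q.map PadicInt.toZMod) := by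
      intro q
      have hA : Abar = (PadicInt.toZMod (p := p)).mapMatrix A := rfl
      rw [aeval_def, aeval_def, ← RingHom.mapMatrix_apply, Polynomial.hom_eval₂,
        Polynomial.eval₂_map, hA]
      congr 1
      refine RingHom.ext fun c => ?_
      rw [RingHom.comp_apply, RingHom.comp_apply, RingHom.mapMatrix_apply]
      exact hscalar c
    have hp0 : PadicInt.toZMod (p : ℤ_[p]) = 0 := by
      rw [map_natCast, ZMod.natCast_self]
    rw [hye, hcompat]
    rw [Polynomial.map_add, Polynomial.map_add, Polynomial.map_mul, Polynomial.map_mul,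
      Polynomial.map_C, hp0, Polynomial.C_0, zero_mul, add_zero, map_add, map_mul, hroot0,
      zero_mul, add_zero, hg, hgbar]
  · -- the equation F(B) = A
    have h20 : aeval A (F.comp y - X) = 0 := by
      obtain ⟨e2, he2⟩ := hχy
      rw [he2, map_mul]
      have : aeval A χ = 0 := by rw [hχdef]; exact Matrix.aeval_self_charpoly A
      rw [this, zero_mul]
    rw [map_sub, aeval_X, sub_eq_zero] at h20
    rw [← aeval_comp]
    exact h20


theorem stmt_15 (p : ℕ) [Fact p.Prime] (hodd : p ≠ 2)
    (F : Polynomial ℤ_[p]) (hF : F.Monic)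
    (n : ℕ) (A : Matrix (Fin n) (Fin n) ℤ_[p])
    (hcyc : minpoly (ZMod p) (A.map PadicInt.toZMod) =
      (A.map PadicInt.toZMod).charpoly)
    (Btil : Matrix (Fin n) (Fin n) (ZMod p))
    (hB1 : aeval Btil (F.map PadicInt.toZMod) = A.map PadicInt.toZMod)
    (hB2 : IsUnit (aeval Btil (derivative (F.map PadicInt.toZMod)))) :
    ∃ B : Matrix (Fin n) (Fin n) ℤ_[p],
      B.map PadicInt.toZMod = Btil ∧ aeval B F = A := by
  rcases Nat.eq_zero_or_pos n with hn | hn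
  · subst hn
    exact ⟨0, Subsingleton.elim _ _, Subsingleton.elim _ _⟩
  · obtain ⟨gbar, hgbar⟩ := stmt15_part1 p n hn A hcyc F Btil hB1
    exact stmt15_part2 p F hF n hn A hcyc Btil hB1 hB2 gbar hgbar
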